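/- arXiv:1007.4626 — 6 statements merged into one kernel-verified Lean document; each statement's English description precedes it below -/
import Mathlib

section
/- For a positive definite 3×3 block matrix A with blocks A_ij, the inequality det(A)·det(A₂₂) ≤ det(B)·det(C) holds, where B = [[A₁₁, A₁₂],[A₁₂*, A₂₂]] and C = [[A₂₂, A₂₃],[A₂₃*, A₃₃]]. (This is strong subadditivity for f = log.) -/
open Matrix
open scoped ComplexOrder

section helpers

variable {m n : Type*} [Fintype m] [Fintype n] [DecidableEq m] [DecidableEq n]

lemma posDef_fromBlocks_left {A : Matrix m m ℂ} {B : Matrix m n ℂ} {C : Matrix n m ℂ}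
    {D : Matrix n n ℂ} (h : (fromBlocks A B C D).PosDef) : A.PosDef := by
  obtain ⟨h1, h2⟩ := posDef_iff_dotProduct_mulVec.mp h
  rw [isHermitian_fromBlocks_iff] at h1
  refine posDef_iff_dotProduct_mulVec.mpr ⟨h1.1, fun x hx => ?_⟩
  have hne : Sum.elim x (0 : n → ℂ) ≠ 0 := fun hc => hx (funext fun i => congrFun hc (Sum.inl i))
  have := h2 hne
  simpa [Function.star_sumElim, fromBlocks_mulVec, sumElim_dotProduct_sumElim] using this

lemma posDef_fromBlocks_right {A : Matrix m m ℂ} {B : Matrix m n ℂ} {C : Matrix n m ℂ}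
    {D : Matrix n n ℂ} (h : (fromBlocks A B C D).PosDef) : D.PosDef := by
  obtain ⟨h1, h2⟩ := posDef_iff_dotProduct_mulVec.mp h
  rw [isHermitian_fromBlocks_iff] at h1
  refine posDef_iff_dotProduct_mulVec.mpr ⟨h1.2.2.2, fun x hx => ?_⟩
  have hne : Sum.elim (0 : m → ℂ) x ≠ 0 := fun hc => hx (funext fun i => congrFun hc (Sum.inr i))
  have := h2 hne
  simpa [Function.star_sumElim, fromBlocks_mulVec, sumElim_dotProduct_sumElim] using this

lemma posDef_schur₁₁ {A : Matrix m m ℂ} (B : Matrix m n ℂ) (D : Matrix n n ℂ)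
    (h : (fromBlocks A B Bᴴ D).PosDef) (hA : A.PosDef) : (D - Bᴴ * A⁻¹ * B).PosDef := by
  haveI := hA.isUnit.invertible
  refine posDef_iff_dotProduct_mulVec.mpr ⟨(Matrix.IsHermitian.fromBlocks₁₁ B D hA.1).mp h.1, fun x hx => ?_⟩
  have hne : (Sum.elim (-((A⁻¹ * B) *ᵥ x)) x) ≠ 0 :=
    fun hc => hx (funext fun i => congrFun hc (Sum.inr i))
  have h2 := (posDef_iff_dotProduct_mulVec.mp h).2 hne
  rw [dotProduct_mulVec, schur_complement_eq₁₁ B D _ _ hA.1, neg_add_cancel, dotProduct_zero,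
    zero_add] at h2
  rw [dotProduct_mulVec]
  exact h2

lemma posDef_schur₂₂ (A : Matrix m m ℂ) (B : Matrix m n ℂ) {D : Matrix n n ℂ}
    (h : (fromBlocks A B Bᴴ D).PosDef) (hD : D.PosDef) : (A - B * D⁻¹ * Bᴴ).PosDef := by
  haveI := hD.isUnit.invertible
  refine posDef_iff_dotProduct_mulVec.mpr ⟨(Matrix.IsHermitian.fromBlocks₂₂ A B hD.1).mp h.1, fun x hx => ?_⟩
  have hne : (Sum.elim x (-((D⁻¹ * Bᴴ) *ᵥ x))) ≠ 0 :=
    fun hc => hx (funext fun i => congrFun hc (Sum.inl i))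
  have h2 := (posDef_iff_dotProduct_mulVec.mp h).2 hne
  rw [dotProduct_mulVec, schur_complement_eq₂₂ A B _ _ hD.1, add_neg_cancel, dotProduct_zero,
    zero_add] at h2
  rw [dotProduct_mulVec]
  exact h2

open scoped MatrixOrder in
lemma det_le_det_add_psd {P Q : Matrix m m ℂ} (hP : P.PosDef) (hQ : Q.PosSemidef) :
    P.det ≤ (P + Q).det := by
  set R := CFC.sqrt P with hRdef
  have hR : R * R = P := CFC.sqrt_mul_sqrt_self P hP.posSemidef.nonneg
  have hRdet : R.det * R.det = P.det := by rw [← det_mul, hR]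
  have hPdet := hP.det_pos
  have hRd : IsUnit R.det := by
    refine isUnit_iff_ne_zero.mpr fun hc => ?_
    rw [hc, mul_zero] at hRdet
    exact hPdet.ne (hRdet)
  haveI := R.invertibleOfIsUnitDet hRd
  have hRH : R.IsHermitian := (CFC.sqrt_nonneg P).posSemidef.1
  have hRinvH : R⁻¹.IsHermitian := hRH.inv
  have hTpsd : (R⁻¹ * Q * R⁻¹).PosSemidef := by
    have := hQ.conjTranspose_mul_mul_same (B := R⁻¹)
    rwa [hRinvH.eq] at this
  set T := R⁻¹ * Q * R⁻¹ with hTdef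
  have key : P + Q = R * (1 + T) * R := by
    rw [Matrix.mul_add, Matrix.add_mul, Matrix.mul_one, hR]
    congr 1
    symm
    calc R * (R⁻¹ * Q * R⁻¹) * R = (R * R⁻¹) * Q * (R⁻¹ * R) := by
          simp only [Matrix.mul_assoc]
      _ = Q := by rw [Matrix.mul_nonsing_inv _ hRd, Matrix.nonsing_inv_mul _ hRd,
          Matrix.one_mul, Matrix.mul_one]
  have hdet1 : (1 : ℂ) ≤ (1 + T).det := by
    have hTh := hTpsd.1
    have hspec : T = (hTh.eigenvectorUnitary : Matrix m m ℂ) * diagonal (RCLike.ofReal ∘ hTh.eigenvalues)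
        * star (hTh.eigenvectorUnitary : Matrix m m ℂ) := hTh.spectral_theorem
    set U := (hTh.eigenvectorUnitary : Matrix m m ℂ) with hUdef
    have hU : U * star U = 1 := Matrix.mem_unitaryGroup_iff.mp hTh.eigenvectorUnitary.2
    have hsplit : 1 + T = U * ((1 : Matrix m m ℂ) + diagonal (RCLike.ofReal ∘ hTh.eigenvalues))
        * star U := by
      rw [Matrix.mul_add, Matrix.add_mul, Matrix.mul_one, hU, ← hspec]
    have hUdet : U.det * (star U).det = 1 := by rw [← det_mul, hU, det_one]
    have hdiag : ((1 : Matrix m m ℂ) + diagonal (RCLike.ofReal ∘ hTh.eigenvalues)).det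
        = ∏ i, ((1 : ℂ) + (hTh.eigenvalues i : ℂ)) := by
      rw [← diagonal_one, diagonal_add, det_diagonal]
      rfl
    rw [hsplit, det_mul, det_mul, hdiag, mul_right_comm, hUdet, one_mul]
    have hprod : (1 : ℝ) ≤ ∏ i : m, ((1 : ℝ) + hTh.eigenvalues i) := by
      calc (1 : ℝ) = ∏ _i : m, (1 : ℝ) := by rw [Finset.prod_const_one]
        _ ≤ ∏ i : m, ((1 : ℝ) + hTh.eigenvalues i) := by
            apply Finset.prod_le_prod
            · intro i _; norm_num
            · intro i _; linarith [hTpsd.eigenvalues_nonneg i]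
    calc (1 : ℂ) = ((1 : ℝ) : ℂ) := by norm_num
      _ ≤ (((∏ i : m, ((1 : ℝ) + hTh.eigenvalues i) : ℝ)) : ℂ) := Complex.real_le_real.mpr hprod
      _ = ∏ i, ((1 : ℂ) + (hTh.eigenvalues i : ℂ)) := by push_cast; rfl
  calc P.det = P.det * 1 := by rw [mul_one]
    _ ≤ P.det * (1 + T).det := mul_le_mul_of_nonneg_left hdet1 hPdet.le
    _ = R.det * (1 + T).det * R.det := by rw [← hRdet]; ring
    _ = (P + Q).det := by rw [key, det_mul, det_mul]

end helpers

noncomputable def blk3 {R : Type*} {n1 n2 n3 : Type*}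
    (A11 : Matrix n1 n1 R) (A12 : Matrix n1 n2 R) (A13 : Matrix n1 n3 R)
    (A21 : Matrix n2 n1 R) (A22 : Matrix n2 n2 R) (A23 : Matrix n2 n3 R)
    (A31 : Matrix n3 n1 R) (A32 : Matrix n3 n2 R) (A33 : Matrix n3 n3 R) :
    Matrix (n1 ⊕ (n2 ⊕ n3)) (n1 ⊕ (n2 ⊕ n3)) R :=
  Matrix.fromBlocks A11 (Matrix.of fun i => Sum.elim (A12 i) (A13 i))
    (Matrix.of (Sum.elim A21 A31)) (Matrix.fromBlocks A22 A23 A32 A33)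

set_option maxHeartbeats 1000000 in
/-- Strong subadditivity for f = log: `det A · det A₂₂ ≤ det B · det C` for a positive definite
3×3 block matrix `A`. -/
theorem det_ssa {n1 n2 n3 : Type*} [Fintype n1] [Fintype n2] [Fintype n3]
    [DecidableEq n1] [DecidableEq n2] [DecidableEq n3]
    (A11 : Matrix n1 n1 ℂ) (A12 : Matrix n1 n2 ℂ) (A13 : Matrix n1 n3 ℂ)
    (A22 : Matrix n2 n2 ℂ) (A23 : Matrix n2 n3 ℂ) (A33 : Matrix n3 n3 ℂ)
    (hA : (blk3 A11 A12 A13 A12ᴴ A22 A23 A13ᴴ A23ᴴ A33).PosDef) :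
    (blk3 A11 A12 A13 A12ᴴ A22 A23 A13ᴴ A23ᴴ A33).det * A22.det
      ≤ (Matrix.fromBlocks A11 A12 A12ᴴ A22).det
        * (Matrix.fromBlocks A22 A23 A23ᴴ A33).det := by
  classical
  have hblk : blk3 A11 A12 A13 A12ᴴ A22 A23 A13ᴴ A23ᴴ A33
      = fromBlocks A11 (fromCols A12 A13) (fromCols A12 A13)ᴴ
        (fromBlocks A22 A23 A23ᴴ A33) := by
    rw [conjTranspose_fromCols_eq_fromRows_conjTranspose]
    rfl
  set M := fromBlocks A22 A23 A23ᴴ A33 with hMdef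
  set Z := fromCols A12 A13 with hZdef
  rw [hblk] at hA ⊢
  have hM : M.PosDef := posDef_fromBlocks_right hA
  have hA22 : A22.PosDef := posDef_fromBlocks_left hM
  haveI : Invertible M := M.invertibleOfIsUnitDet hM.det_pos.ne'.isUnit
  haveI : Invertible A22 := A22.invertibleOfIsUnitDet hA22.det_pos.ne'.isUnit
  have hK : (A11 - Z * M⁻¹ * Zᴴ).PosDef := posDef_schur₂₂ A11 Z hA hM
  have hG : (A33 - A23ᴴ * A22⁻¹ * A23).PosDef := posDef_schur₁₁ A23 A33 hM hA22
  set G := A33 - A23ᴴ * A22⁻¹ * A23 with hGdef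
  haveI : Invertible G := G.invertibleOfIsUnitDet hG.det_pos.ne'.isUnit
  have hD22 : A22 * A22⁻¹ = 1 := Matrix.mul_nonsing_inv _ hA22.det_pos.ne'.isUnit
  have hGG : G * G⁻¹ = 1 := Matrix.mul_nonsing_inv _ hG.det_pos.ne'.isUnit
  have hFG : A33 * G⁻¹ = 1 + A23ᴴ * A22⁻¹ * A23 * G⁻¹ := by
    have h1 : (A33 - A23ᴴ * A22⁻¹ * A23) * G⁻¹ = 1 := hGG
    rw [Matrix.sub_mul] at h1
    exact sub_eq_iff_eq_add.mp h1
  set R := fromBlocks (A22⁻¹ + A22⁻¹ * A23 * G⁻¹ * A23ᴴ * A22⁻¹) (-(A22⁻¹ * A23 * G⁻¹))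
      (-(G⁻¹ * A23ᴴ * A22⁻¹)) G⁻¹ with hRdef
  have hMR : M * R = 1 := by
    rw [hMdef, hRdef, fromBlocks_multiply, ← fromBlocks_one, fromBlocks_inj]
    refine ⟨?_, ?_, ?_, ?_⟩
    · simp only [Matrix.mul_add, Matrix.mul_neg, ← Matrix.mul_assoc, hD22, Matrix.one_mul]
      abel
    · simp only [Matrix.mul_add, Matrix.mul_neg, ← Matrix.mul_assoc, hD22, Matrix.one_mul]
      abel
    · simp only [Matrix.mul_add, Matrix.mul_neg, ← Matrix.mul_assoc, hFG,
        Matrix.add_mul, Matrix.one_mul]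
      abel
    · simp only [Matrix.mul_add, Matrix.mul_neg, ← Matrix.mul_assoc, hFG,
        Matrix.add_mul, Matrix.one_mul]
      abel
  have hMinv : M⁻¹ = R := Matrix.inv_eq_right_inv hMR
  set V := fromCols (-(A23ᴴ * A22⁻¹)) (1 : Matrix n3 n3 ℂ) with hVdef
  have hVH : Vᴴ = fromRows (-(A22⁻¹ * A23)) (1 : Matrix n3 n3 ℂ) := by
    rw [hVdef, conjTranspose_fromCols_eq_fromRows_conjTranspose, conjTranspose_one,
      conjTranspose_neg, conjTranspose_mul, conjTranspose_conjTranspose, hA22.1.inv.eq]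
  have hRsplit : R = fromBlocks A22⁻¹ 0 0 0 + Vᴴ * G⁻¹ * V := by
    rw [hVH, hVdef, fromRows_mul, fromRows_mul_fromCols, fromBlocks_add, hRdef,
      fromBlocks_inj]
    refine ⟨?_, ?_, ?_, ?_⟩ <;>
      simp only [Matrix.neg_mul, Matrix.mul_neg, neg_neg, Matrix.one_mul, Matrix.mul_one,
        add_zero, zero_add, Matrix.mul_assoc]
  set W := V * Zᴴ with hWdef
  have hZM : Z * M⁻¹ * Zᴴ = A12 * A22⁻¹ * A12ᴴ + Wᴴ * G⁻¹ * W := by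
    rw [hMinv, hRsplit, Matrix.mul_add, Matrix.add_mul]
    congr 1
    · rw [hZdef, fromCols_mul_fromBlocks]
      simp only [Matrix.mul_zero, add_zero]
      rw [conjTranspose_fromCols_eq_fromRows_conjTranspose, fromCols_mul_fromRows]
      simp [Matrix.zero_mul]
    · rw [hWdef, conjTranspose_mul, conjTranspose_conjTranspose]
      simp only [Matrix.mul_assoc]
  have hSsum : A11 - A12 * A22⁻¹ * A12ᴴ = (A11 - Z * M⁻¹ * Zᴴ) + Wᴴ * G⁻¹ * W := by
    rw [hZM]; abel
  have hT : (Wᴴ * G⁻¹ * W).PosSemidef := (hG.inv.posSemidef).conjTranspose_mul_mul_same W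
  have hdetKS : (A11 - Z * M⁻¹ * Zᴴ).det ≤ (A11 - A12 * A22⁻¹ * A12ᴴ).det := by
    rw [hSsum]
    exact det_le_det_add_psd hK hT
  have hdetA : (fromBlocks A11 Z Zᴴ M).det = M.det * (A11 - Z * M⁻¹ * Zᴴ).det := by
    rw [det_fromBlocks₂₂, invOf_eq_nonsing_inv]
  have hdetB : (fromBlocks A11 A12 A12ᴴ A22).det
      = A22.det * (A11 - A12 * A22⁻¹ * A12ᴴ).det := by
    rw [det_fromBlocks₂₂, invOf_eq_nonsing_inv]
  rw [hdetA, hdetB]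
  calc M.det * (A11 - Z * M⁻¹ * Zᴴ).det * A22.det
      = (M.det * A22.det) * (A11 - Z * M⁻¹ * Zᴴ).det := by ring
    _ ≤ (M.det * A22.det) * (A11 - A12 * A22⁻¹ * A12ᴴ).det :=
        mul_le_mul_of_nonneg_left hdetKS (mul_nonneg hM.det_pos.le hA22.det_pos.le)
    _ = A22.det * (A11 - A12 * A22⁻¹ * A12ᴴ).det * M.det := by ring
end

section
/- For a positive definite 3×3 block matrix A, equality det(A)·det(A₂₂) = det(B)·det(C) holds if and only if A₁₃ = A₁₂ A₂₂⁻¹ A₂₃. -/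
open Matrix
open scoped ComplexOrder

section Aux

variable {m l n : Type*} [Fintype m] [Fintype l] [Fintype n]
  [DecidableEq m] [DecidableEq l] [DecidableEq n]

private lemma prod_all_one {ι : Type*} [Fintype ι] [DecidableEq ι] (a : ι → ℝ)
    (h0 : ∀ i, 0 ≤ a i) (h1 : ∀ i, a i ≤ 1) (hp : ∏ i, a i = 1) (i : ι) : a i = 1 := by
  refine le_antisymm (h1 i) ?_
  calc (1:ℝ) = ∏ j, a j := hp.symm
    _ = a i * ∏ j ∈ Finset.univ.erase i, a j :=
        (Finset.mul_prod_erase Finset.univ a (Finset.mem_univ i)).symm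
    _ ≤ a i * 1 := by
        refine mul_le_mul_of_nonneg_left ?_ (h0 i)
        exact Finset.prod_le_one (fun j _ => h0 j) (fun j _ => h1 j)
    _ = a i := mul_one _

private lemma posdef_submatrix_equiv {M : Matrix n n ℂ} (hM : M.PosDef) (e : m ≃ n) :
    (M.submatrix e e).PosDef := by
  refine PosDef.of_dotProduct_mulVec_pos ((isHermitian_submatrix_equiv e).mpr hM.1) (fun x hx => ?_)
  have hx' : x ∘ e.symm ≠ 0 := by
    intro h
    apply hx
    funext i
    have := congrFun h (e i)
    simpa using this
  have := hM.dotProduct_mulVec_pos hx'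
  rw [submatrix_mulVec_equiv]
  rwa [show star x ⬝ᵥ (M *ᵥ (x ∘ e.symm)) ∘ e = star (x ∘ e.symm) ⬝ᵥ (M *ᵥ (x ∘ e.symm)) by
    rw [show star (x ∘ e.symm) = (star x) ∘ e.symm from rfl, comp_equiv_symm_dotProduct]]

private lemma posdef_block11 {A : Matrix m m ℂ} {B : Matrix m l ℂ} {C : Matrix l m ℂ}
    {D : Matrix l l ℂ} (h : (fromBlocks A B C D).PosDef) : A.PosDef := by
  refine PosDef.of_dotProduct_mulVec_pos (isHermitian_fromBlocks_iff.mp h.1).1 (fun x hx => ?_)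
  have hx' : Sum.elim x (0 : l → ℂ) ≠ 0 := by
    intro hc; apply hx; funext i; exact congrFun hc (Sum.inl i)
  have := h.dotProduct_mulVec_pos hx'
  simpa [fromBlocks_mulVec, Function.star_sumElim, sumElim_dotProduct_sumElim] using this

private lemma posdef_block22 {A : Matrix m m ℂ} {B : Matrix m l ℂ} {C : Matrix l m ℂ}
    {D : Matrix l l ℂ} (h : (fromBlocks A B C D).PosDef) : D.PosDef := by
  refine PosDef.of_dotProduct_mulVec_pos (isHermitian_fromBlocks_iff.mp h.1).2.2.2 (fun x hx => ?_)
  have hx' : Sum.elim (0 : m → ℂ) x ≠ 0 := by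
    intro hc; apply hx; funext i; exact congrFun hc (Sum.inr i)
  have := h.dotProduct_mulVec_pos hx'
  simpa [fromBlocks_mulVec, Function.star_sumElim, sumElim_dotProduct_sumElim] using this

private lemma posdef_schur {A : Matrix m m ℂ} {B : Matrix m l ℂ} {D : Matrix l l ℂ}
    [Invertible A] (hA : A.PosDef)
    (h : (fromBlocks A B Bᴴ D).PosDef) : (D - Bᴴ * A⁻¹ * B).PosDef := by
  refine PosDef.of_dotProduct_mulVec_pos ((IsHermitian.fromBlocks₁₁ B D hA.1).mp h.1) (fun x hx => ?_)
  have hx' : Sum.elim (-((A⁻¹ * B) *ᵥ x)) x ≠ 0 := by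
    intro hc; apply hx; funext i; exact congrFun hc (Sum.inr i)
  have key := h.dotProduct_mulVec_pos hx'
  rw [dotProduct_mulVec, schur_complement_eq₁₁ B D _ _ hA.1, neg_add_cancel, dotProduct_zero,
    zero_add] at key
  rwa [dotProduct_mulVec]

/-- If `M` is positive definite, `N` and `M - N` are PSD and `det (M - N) = det M`,
then `N = 0`. -/
private lemma psd_det_eq {M N : Matrix n n ℂ} (hM : M.PosDef) (hN : N.PosSemidef)
    (hMN : (M - N).PosSemidef) (hdet : (M - N).det = M.det) : N = 0 := by
  set S : Matrix n n ℂ := (open scoped MatrixOrder in CFC.sqrt M) with hSdef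
  have hS : S.PosSemidef := (open scoped MatrixOrder in (CFC.sqrt_nonneg M).posSemidef)
  have hSS : S * S = M := (open scoped MatrixOrder in CFC.sqrt_mul_sqrt_self M hM.posSemidef.nonneg)
  have hdM : M.det ≠ 0 := hM.det_pos.ne'
  have hdS : S.det ≠ 0 := by
    intro h
    apply hdM
    rw [← hSS, det_mul, h, zero_mul]
  haveI : Invertible S := invertibleOfIsUnitDet S (isUnit_iff_ne_zero.mpr hdS)
  have hSinv : S⁻¹.IsHermitian := hS.1.inv
  set K : Matrix n n ℂ := S⁻¹ * N * S⁻¹ with hKdef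
  have hK : K.PosSemidef := by
    have := hN.conjTranspose_mul_mul_same S⁻¹
    rwa [hSinv.eq] at this
  have hNK : S * K * S = N := by
    rw [hKdef]
    simp only [Matrix.mul_assoc, Matrix.inv_mul_of_invertible, Matrix.mul_one]
    rw [Matrix.mul_inv_cancel_left_of_invertible]
  have hSMS : S⁻¹ * M * S⁻¹ = 1 := by
    rw [← hSS, Matrix.inv_mul_cancel_left_of_invertible, Matrix.mul_inv_of_invertible]
  have h1K : 1 - K = S⁻¹ * (M - N) * S⁻¹ := by
    rw [Matrix.mul_sub, Matrix.sub_mul, hSMS]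
  have hIK : (1 - K).PosSemidef := by
    have := hMN.conjTranspose_mul_mul_same S⁻¹
    rwa [hSinv.eq, ← h1K] at this
  have hMNK : S * (1 - K) * S = M - N := by
    rw [h1K]
    simp only [Matrix.mul_assoc, Matrix.inv_mul_of_invertible, Matrix.mul_one]
    rw [Matrix.mul_inv_cancel_left_of_invertible]
  have hdet1K : (1 - K).det = 1 := by
    have h1 : S.det * (1 - K).det * S.det = M.det := by
      rw [← det_mul, ← det_mul, hMNK, hdet]
    have h2 : S.det * 1 * S.det = M.det := by rw [mul_one, ← det_mul, hSS]
    have := h1.trans h2.symm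
    have h3 : S.det * ((1 - K).det * S.det) = S.det * (1 * S.det) := by
      rw [← mul_assoc, ← mul_assoc]; exact this
    have h4 := mul_left_cancel₀ hdS h3
    exact mul_right_cancel₀ hdS h4
  -- spectral analysis of K
  have hKh : K.IsHermitian := hK.1
  set μ := hKh.eigenvalues with hμdef
  set U : Matrix n n ℂ := (hKh.eigenvectorUnitary : Matrix n n ℂ) with hUdef
  have hUU : star U * U = 1 := by
    rw [hUdef]; exact Unitary.coe_star_mul_self _
  set D : Matrix n n ℂ := diagonal (RCLike.ofReal ∘ μ) with hDdef
  have hdiag : star U * K * U = D := by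
    have := hKh.conjStarAlgAut_star_eigenvectorUnitary
    rw [Unitary.conjStarAlgAut_star_apply] at this
    exact this
  have h1D : star U * (1 - K) * U = 1 - D := by
    rw [Matrix.mul_sub, Matrix.sub_mul, Matrix.mul_one, hUU, hdiag]
  have hPSD1D : (1 - D).PosSemidef := by
    have := hIK.conjTranspose_mul_mul_same U
    rwa [← Matrix.star_eq_conjTranspose, h1D] at this
  have hμ_le : ∀ i, μ i ≤ 1 := by
    intro i
    have h1D' : (1 : Matrix n n ℂ) - D = diagonal (fun i => 1 - (μ i : ℂ)) := by
      rw [hDdef, ← diagonal_one, diagonal_sub]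
      rfl
    rw [h1D', posSemidef_diagonal_iff] at hPSD1D
    have := hPSD1D i
    have h2 : ((1 - μ i : ℝ) : ℂ) = 1 - (μ i : ℂ) := by push_cast; ring
    rw [← h2] at this
    have := Complex.zero_le_real.mp this
    linarith
  have hμ_nonneg : ∀ i, 0 ≤ μ i := hK.eigenvalues_nonneg
  -- det (1 - K) = ∏ (1 - μ i)
  have hdetU : (star U).det * U.det = 1 := by rw [← det_mul, hUU, det_one]
  have hdet1D : (1 - D).det = 1 := by
    have : (star U * (1 - K) * U).det = (1 - K).det := by
      rw [det_mul, det_mul, mul_comm ((star U).det), mul_assoc, hdetU, mul_one]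
    rw [h1D] at this
    rw [this, hdet1K]
  have hprod : ∏ i, (1 - μ i) = 1 := by
    have h1D' : (1 : Matrix n n ℂ) - D = diagonal (fun i => ((1 - μ i : ℝ) : ℂ)) := by
      rw [hDdef, ← diagonal_one, diagonal_sub]
      funext i j
      simp [diagonal, Function.comp]
    rw [h1D', det_diagonal] at hdet1D
    have : ((∏ i, (1 - μ i) : ℝ) : ℂ) = 1 := by
      rw [Complex.ofReal_prod]; exact hdet1D
    exact_mod_cast this
  have hμ0 : ∀ i, μ i = 0 := by
    intro i
    have := prod_all_one (fun i => 1 - μ i)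
      (fun j => show (0:ℝ) ≤ 1 - μ j by linarith [hμ_le j])
      (fun j => show (1:ℝ) - μ j ≤ 1 by linarith [hμ_nonneg j]) hprod i
    linarith
  have hD0 : D = 0 := by
    rw [hDdef]
    ext i j
    rw [Matrix.diagonal_apply]
    simp [hμ0]
  have hK0 : K = 0 := by
    have hspec : K = U * D * star U := by
      have h := hKh.spectral_theorem
      rw [Unitary.conjStarAlgAut_apply] at h
      exact h
    rw [hspec, hD0, Matrix.mul_zero, Matrix.zero_mul]
  rw [← hNK, hK0, Matrix.mul_zero, Matrix.zero_mul]

/-- Fischer's equality case for 2×2 block positive definite matrices. -/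
private lemma fischer_eq {A : Matrix m m ℂ} {B : Matrix m l ℂ} {D : Matrix l l ℂ}
    (h : (fromBlocks A B Bᴴ D).PosDef) :
    (fromBlocks A B Bᴴ D).det = A.det * D.det ↔ B = 0 := by
  have hA : A.PosDef := posdef_block11 h
  have hD : D.PosDef := posdef_block22 h
  haveI : Invertible A := invertibleOfIsUnitDet A (isUnit_iff_ne_zero.mpr hA.det_pos.ne')
  rw [det_fromBlocks₁₁, Matrix.invOf_eq_nonsing_inv]
  constructor
  · intro hd
    have hAd : A.det ≠ 0 := hA.det_pos.ne'
    have h2 : (D - Bᴴ * A⁻¹ * B).det = D.det := mul_left_cancel₀ hAd hd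
    have hN : (Bᴴ * A⁻¹ * B).PosSemidef := hA.inv.posSemidef.conjTranspose_mul_mul_same B
    have hMN : (D - Bᴴ * A⁻¹ * B).PosSemidef := (posdef_schur hA h).posSemidef
    have hzero : Bᴴ * A⁻¹ * B = 0 := psd_det_eq hD hN hMN h2
    -- conclude B = 0
    have hAinv : A⁻¹.PosDef := hA.inv
    set T : Matrix m m ℂ := (open scoped MatrixOrder in CFC.sqrt A⁻¹) with hTdef
    have hT : T.PosSemidef := (open scoped MatrixOrder in (CFC.sqrt_nonneg A⁻¹).posSemidef)
    have hTT : T * T = A⁻¹ := (open scoped MatrixOrder in CFC.sqrt_mul_sqrt_self A⁻¹ hAinv.posSemidef.nonneg)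
    have hdT : T.det ≠ 0 := by
      intro hc
      apply hAinv.det_pos.ne'
      rw [← hTT, det_mul, hc, zero_mul]
    haveI : Invertible T := invertibleOfIsUnitDet T (isUnit_iff_ne_zero.mpr hdT)
    have hTB : (T * B)ᴴ * (T * B) = Bᴴ * A⁻¹ * B := by
      rw [conjTranspose_mul, hT.1.eq, ← hTT]
      simp only [Matrix.mul_assoc]
    have : T * B = 0 := by
      rw [← conjTranspose_mul_self_eq_zero (A := T * B), hTB, hzero]
    calc B = T⁻¹ * (T * B) := (Matrix.inv_mul_cancel_left_of_invertible T B).symm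
      _ = 0 := by rw [this, Matrix.mul_zero]
  · intro hb
    subst hb
    simp

end Aux

set_option maxHeartbeats 1600000 in
/-- Equality `det A · det A₂₂ = det B · det C` holds iff `A₁₃ = A₁₂ A₂₂⁻¹ A₂₃`. -/
theorem det_ssa_equality_iff {n1 n2 n3 : Type*} [Fintype n1] [Fintype n2] [Fintype n3]
    [DecidableEq n1] [DecidableEq n2] [DecidableEq n3]
    (A11 : Matrix n1 n1 ℂ) (A12 : Matrix n1 n2 ℂ) (A13 : Matrix n1 n3 ℂ)
    (A22 : Matrix n2 n2 ℂ) (A23 : Matrix n2 n3 ℂ) (A33 : Matrix n3 n3 ℂ)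
    (hA : (blk3 A11 A12 A13 A12ᴴ A22 A23 A13ᴴ A23ᴴ A33).PosDef) :
    ((blk3 A11 A12 A13 A12ᴴ A22 A23 A13ᴴ A23ᴴ A33).det * A22.det
      = (Matrix.fromBlocks A11 A12 A12ᴴ A22).det
        * (Matrix.fromBlocks A22 A23 A23ᴴ A33).det)
      ↔ A13 = A12 * A22⁻¹ * A23 := by
  set A := blk3 A11 A12 A13 A12ᴴ A22 A23 A13ᴴ A23ᴴ A33 with hAdef
  -- A22 is positive definite
  have hA' : (fromBlocks A11 (Matrix.of fun i => Sum.elim (A12 i) (A13 i))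
      (Matrix.of (Sum.elim A12ᴴ A13ᴴ)) (fromBlocks A22 A23 A23ᴴ A33)).PosDef := hA
  have hC : (fromBlocks A22 A23 A23ᴴ A33).PosDef := posdef_block22 hA'
  have hA22 : A22.PosDef := posdef_block11 hC
  have hd22 : A22.det ≠ 0 := hA22.det_pos.ne'
  haveI : Invertible A22 := invertibleOfIsUnitDet A22 (isUnit_iff_ne_zero.mpr hd22)
  -- reorder the blocks
  set e : (n2 ⊕ (n1 ⊕ n3)) ≃ (n1 ⊕ (n2 ⊕ n3)) :=
    (Equiv.sumAssoc n2 n1 n3).symm.trans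
      ((Equiv.sumCongr (Equiv.sumComm n2 n1) (Equiv.refl n3)).trans (Equiv.sumAssoc n1 n2 n3))
    with hedef
  set B2 : Matrix n2 (n1 ⊕ n3) ℂ := Matrix.of fun i => Sum.elim (A12ᴴ i) (A23 i) with hB2def
  set D2 : Matrix (n1 ⊕ n3) (n1 ⊕ n3) ℂ := fromBlocks A11 A13 A13ᴴ A33 with hD2def
  have heq : A.submatrix e e = fromBlocks A22 B2 B2ᴴ D2 := by
    ext i j
    rcases i with i | i | i <;> rcases j with j | j | j <;>
      simp [hedef, hAdef, blk3, hB2def, hD2def, Matrix.conjTranspose_apply, Sum.elim_inl, Sum.elim_inr,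
        Matrix.submatrix_apply, Matrix.fromBlocks_apply₁₁, Matrix.fromBlocks_apply₁₂,
        Matrix.fromBlocks_apply₂₁, Matrix.fromBlocks_apply₂₂] <;> rfl
  have hA'' : (fromBlocks A22 B2 B2ᴴ D2).PosDef := heq ▸ posdef_submatrix_equiv hA e
  -- Schur complement
  set S := D2 - B2ᴴ * A22⁻¹ * B2 with hSdef
  have hdetA : A.det = A22.det * S.det := by
    rw [← det_submatrix_equiv_self e, heq, det_fromBlocks₁₁, Matrix.invOf_eq_nonsing_inv]
  have hS : S.PosDef := posdef_schur hA22 hA''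
  set S11 := A11 - A12 * A22⁻¹ * A12ᴴ with hS11def
  set S12 := A13 - A12 * A22⁻¹ * A23 with hS12def
  set S33 := A33 - A23ᴴ * A22⁻¹ * A23 with hS33def
  have hS21 : S12ᴴ = A13ᴴ - A23ᴴ * A22⁻¹ * A12ᴴ := by
    rw [hS12def, conjTranspose_sub, conjTranspose_mul, conjTranspose_mul,
      conjTranspose_nonsing_inv, hA22.1.eq, Matrix.mul_assoc]
  have hSblocks : S = fromBlocks S11 S12 S12ᴴ S33 := by
    rw [hS21]
    ext i j
    rcases i with i | i <;> rcases j with j | j <;>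
      simp [hSdef, hS11def, hS12def, hS33def, hD2def, hB2def, Matrix.fromBlocks,
        Matrix.mul_apply, Matrix.sub_apply, conjTranspose_apply, Finset.mul_sum,
        Finset.sum_mul, mul_comm, mul_assoc, mul_left_comm]
  have hSpd : (fromBlocks S11 S12 S12ᴴ S33).PosDef := hSblocks ▸ hS
  -- determinant identities for B and C
  have hdetB : (fromBlocks A11 A12 A12ᴴ A22).det = A22.det * S11.det := by
    rw [det_fromBlocks₂₂, Matrix.invOf_eq_nonsing_inv]
  have hdetC : (fromBlocks A22 A23 A23ᴴ A33).det = A22.det * S33.det := by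
    rw [det_fromBlocks₁₁, Matrix.invOf_eq_nonsing_inv]
  have hfischer := fischer_eq hSpd
  rw [hdetA, hdetB, hdetC, hSblocks]
  rw [show A22.det * (fromBlocks S11 S12 S12ᴴ S33).det * A22.det
      = (A22.det * A22.det) * (fromBlocks S11 S12 S12ᴴ S33).det by ring,
    show A22.det * S11.det * (A22.det * S33.det) = (A22.det * A22.det) * (S11.det * S33.det)
      by ring,
    mul_right_inj' (mul_ne_zero hd22 hd22)]
  rw [hfischer, hS12def, sub_eq_zero]
end

section
/- If A is a positive semidefinite 3×3 block matrix with A₂₃ = 0 (or A₁₂ = 0), then strong subadditivity Tr f(A) + Tr f(A₂₂) ≤ Tr f(B) + Tr f(C) holds for every concave continuous function f : [0,∞) → ℝ. -/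
open Matrix
open scoped ComplexOrder

open Polynomial in
lemma my_charpoly_diagonal {n : Type*} [Fintype n] [DecidableEq n] (d : n → ℂ) :
    (Matrix.diagonal d).charpoly = ∏ i, (X - C (d i)) := by
  have h : charmatrix (Matrix.diagonal d)
      = Matrix.diagonal (fun i => (X : ℂ[X]) - C (d i)) := by
    ext i j
    by_cases h : i = j
    · subst h; simp [charmatrix_apply_eq]
    · simp [charmatrix_apply_ne _ _ _ h, Matrix.diagonal_apply_ne _ h]
  unfold Matrix.charpoly
  rw [h, Matrix.det_diagonal]

open Polynomial in
lemma my_charpoly_conj {n : Type*} [Fintype n] [DecidableEq n]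
    (U M : Matrix n n ℂ) (h1 : U * Uᴴ = 1) (h2 : Uᴴ * U = 1) :
    (U * M * Uᴴ).charpoly = M.charpoly := by
  set φ : Matrix n n ℂ →+* Matrix n n ℂ[X] := (C : ℂ →+* ℂ[X]).mapMatrix with hφ
  have hsc : ∀ B : Matrix n n ℂ[X],
      Matrix.scalar n (X : ℂ[X]) * B = B * Matrix.scalar n (X : ℂ[X]) :=
    fun B => (Matrix.scalar_commute (X : ℂ[X]) (fun r' => Commute.all _ _) B).eq
  have hc : charmatrix (U * M * Uᴴ) = φ U * charmatrix M * φ Uᴴ := by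
    rw [charmatrix, charmatrix, mul_sub, sub_mul]
    congr 1
    · calc Matrix.scalar n (X : ℂ[X])
          = Matrix.scalar n (X : ℂ[X]) * φ (U * Uᴴ) := by rw [h1, _root_.map_one, mul_one]
        _ = Matrix.scalar n (X : ℂ[X]) * φ U * φ Uᴴ := by rw [_root_.map_mul, ← mul_assoc]
        _ = φ U * Matrix.scalar n (X : ℂ[X]) * φ Uᴴ := by rw [hsc (φ U)]
    · show φ (U * M * Uᴴ) = φ U * φ M * φ Uᴴ
      rw [_root_.map_mul, _root_.map_mul]
  have hdet : (φ U).det * (φ Uᴴ).det = 1 := by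
    rw [← Matrix.det_mul, ← _root_.map_mul, h1, _root_.map_one, Matrix.det_one]
  unfold Matrix.charpoly
  rw [hc, Matrix.det_mul, Matrix.det_mul,
    show (φ U).det * (charmatrix M).det * (φ Uᴴ).det
      = (charmatrix M).det * ((φ U).det * (φ Uᴴ).det) from by ring, hdet, mul_one]

/-- The multiset of values of a function on a fintype. -/
noncomputable def evMul {n : Type*} [Fintype n] (lam : n → ℝ) : Multiset ℝ :=
  Finset.univ.val.map lam

lemma evMul_sum {n : Type*} [Fintype n] (g : ℝ → ℝ) (lam : n → ℝ) :
    ∑ i, g (lam i) = ((evMul lam).map g).sum := by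
  rw [evMul, Multiset.map_map]
  rfl

open Polynomial in
lemma my_roots_eq {n : Type*} [Fintype n] [DecidableEq n] {M : Matrix n n ℂ}
    (hM : M.IsHermitian) :
    M.charpoly.roots = (evMul hM.eigenvalues).map (fun r : ℝ => (r : ℂ)) := by
  have hU1 : (hM.eigenvectorUnitary : Matrix n n ℂ) * star (hM.eigenvectorUnitary : Matrix n n ℂ)
      = 1 := (Matrix.mem_unitaryGroup_iff).mp hM.eigenvectorUnitary.2
  have hU2 : star (hM.eigenvectorUnitary : Matrix n n ℂ) * (hM.eigenvectorUnitary : Matrix n n ℂ)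
      = 1 := (Matrix.mem_unitaryGroup_iff').mp hM.eigenvectorUnitary.2
  have hU1' : (hM.eigenvectorUnitary : Matrix n n ℂ) * (hM.eigenvectorUnitary : Matrix n n ℂ)ᴴ = 1 := by
    rw [← Matrix.star_eq_conjTranspose]; exact hU1
  have hU2' : (hM.eigenvectorUnitary : Matrix n n ℂ)ᴴ * (hM.eigenvectorUnitary : Matrix n n ℂ) = 1 := by
    rw [← Matrix.star_eq_conjTranspose]; exact hU2
  have h1 : M.charpoly = ∏ i, (X - C ((hM.eigenvalues i : ℝ) : ℂ)) := by
    conv_lhs => rw [hM.spectral_theorem, Unitary.conjStarAlgAut_apply]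
    rw [Matrix.star_eq_conjTranspose, my_charpoly_conj _ _ hU1' hU2', my_charpoly_diagonal]
    rfl
  rw [h1, show (∏ i, (X - C ((hM.eigenvalues i : ℝ) : ℂ)))
      = (((evMul hM.eigenvalues).map (fun r : ℝ => (r : ℂ))).map (fun z => X - C z)).prod by
    rw [evMul, Multiset.map_map, Multiset.map_map]; rfl]
  exact roots_multiset_prod_X_sub_C _

lemma evMul_eq_of_charpoly {n m : Type*} [Fintype n] [DecidableEq n] [Fintype m] [DecidableEq m]
    {M : Matrix n n ℂ} {N : Matrix m m ℂ} (hM : M.IsHermitian) (hN : N.IsHermitian)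
    (h : M.charpoly = N.charpoly) :
    evMul hM.eigenvalues = evMul hN.eigenvalues := by
  apply Multiset.map_injective Complex.ofReal_injective
  rw [← my_roots_eq hM, ← my_roots_eq hN, h]

open Polynomial in
lemma evMul_add_of_charpoly {k n m : Type*} [Fintype k] [DecidableEq k]
    [Fintype n] [DecidableEq n] [Fintype m] [DecidableEq m]
    {D : Matrix k k ℂ} {P : Matrix n n ℂ} {Q : Matrix m m ℂ}
    (hD : D.IsHermitian) (hP : P.IsHermitian) (hQ : Q.IsHermitian)
    (h : D.charpoly = P.charpoly * Q.charpoly) :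
    evMul hD.eigenvalues = evMul hP.eigenvalues + evMul hQ.eigenvalues := by
  apply Multiset.map_injective Complex.ofReal_injective
  rw [← my_roots_eq hD, h, Multiset.map_add, ← my_roots_eq hP, ← my_roots_eq hQ]
  exact Polynomial.roots_mul (mul_ne_zero P.charpoly_monic.ne_zero Q.charpoly_monic.ne_zero)

/-- Peierls inequality. -/
lemma peierls {n : Type*} [Fintype n] [DecidableEq n]
    {f : ℝ → ℝ} (hconc : ConcaveOn ℝ (Set.Ici 0) f)
    {M : Matrix n n ℂ} (hM : M.PosSemidef) (V : Matrix n n ℂ)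
    (hV1 : V * Vᴴ = 1) (hV2 : Vᴴ * V = 1) :
    ∑ i, f (hM.1.eigenvalues i) ≤ ∑ i, f ((Vᴴ * M * V) i i).re := by
  classical
  set lam := hM.1.eigenvalues with hlam
  set E : Matrix n n ℂ := (hM.1.eigenvectorUnitary : Matrix n n ℂ) with hE
  have hE1 : E * Eᴴ = 1 := by
    rw [hE, ← Matrix.star_eq_conjTranspose]
    exact (Matrix.mem_unitaryGroup_iff).mp hM.1.eigenvectorUnitary.2
  have hE2 : Eᴴ * E = 1 := by
    rw [hE, ← Matrix.star_eq_conjTranspose]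
    exact (Matrix.mem_unitaryGroup_iff').mp hM.1.eigenvectorUnitary.2
  set W := Vᴴ * E with hW
  have hWc : Wᴴ = Eᴴ * V := by
    rw [hW, Matrix.conjTranspose_mul, Matrix.conjTranspose_conjTranspose]
  have hWW : W * Wᴴ = 1 := by
    rw [hWc, hW, Matrix.mul_assoc, ← Matrix.mul_assoc E Eᴴ V, hE1, Matrix.one_mul, hV2]
  have hWW' : Wᴴ * W = 1 := by
    rw [hWc, hW, Matrix.mul_assoc, ← Matrix.mul_assoc V Vᴴ E, hV1, Matrix.one_mul, hE2]
  set S : n → n → ℝ := fun i j => Complex.normSq (W i j) with hS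
  have hrow : ∀ i, ∑ j, S i j = 1 := by
    intro i
    have h := congrFun (congrFun hWW i) i
    rw [Matrix.mul_apply] at h
    rw [Matrix.one_apply_eq] at h
    have h2 : (∑ j, ((S i j : ℝ) : ℂ)) = 1 := by
      rw [← h]
      refine Finset.sum_congr rfl fun j _ => ?_
      rw [Matrix.conjTranspose_apply, hS]
      simp [Complex.mul_conj]
    exact_mod_cast h2
  have hcol : ∀ j, ∑ i, S i j = 1 := by
    intro j
    have h := congrFun (congrFun hWW' j) j
    rw [Matrix.mul_apply] at h
    rw [Matrix.one_apply_eq] at h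
    have h2 : (∑ i, ((S i j : ℝ) : ℂ)) = 1 := by
      rw [← h]
      refine Finset.sum_congr rfl fun i _ => ?_
      rw [Matrix.conjTranspose_apply, hS]
      simp [Complex.normSq_eq_conj_mul_self]
    exact_mod_cast h2
  have hdiag : ∀ i, ((Vᴴ * M * V) i i).re = ∑ j, S i j * lam j := by
    intro i
    have hMeq : Vᴴ * M * V = W * Matrix.diagonal (fun j => ((lam j : ℝ) : ℂ)) * Wᴴ := by
      conv_lhs => rw [hM.1.spectral_theorem, Unitary.conjStarAlgAut_apply]
      rw [hWc, hW, ← Matrix.star_eq_conjTranspose E]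
      have hco : (RCLike.ofReal ∘ hM.1.eigenvalues : n → ℂ) = fun j => ((lam j : ℝ) : ℂ) := rfl
      rw [hco]
      simp only [Matrix.mul_assoc]
      rfl
    rw [hMeq]
    have hent : (W * Matrix.diagonal (fun j => ((lam j : ℝ) : ℂ)) * Wᴴ) i i
        = ∑ j, ((S i j * lam j : ℝ) : ℂ) := by
      rw [Matrix.mul_apply]
      refine Finset.sum_congr rfl fun j _ => ?_
      rw [Matrix.mul_diagonal, Matrix.conjTranspose_apply]
      have hws : W i j * star (W i j) = ((S i j : ℝ) : ℂ) := by
        rw [hS]; simp [Complex.mul_conj]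
      push_cast
      calc W i j * ((lam j : ℝ) : ℂ) * star (W i j)
          = (W i j * star (W i j)) * ((lam j : ℝ) : ℂ) := by ring
        _ = ((S i j : ℝ) : ℂ) * ((lam j : ℝ) : ℂ) := by rw [hws]
    rw [hent]
    rw [Complex.re_sum]
    refine Finset.sum_congr rfl fun j _ => ?_
    exact Complex.ofReal_re _
  have jensen : ∀ i, ∑ j, S i j * f (lam j) ≤ f (((Vᴴ * M * V) i i).re) := by
    intro i
    rw [hdiag i]
    have h := hconc.le_map_sum (t := Finset.univ) (w := fun j => S i j) (p := lam)
      (fun j _ => Complex.normSq_nonneg _) (hrow i)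
      (fun j _ => hM.eigenvalues_nonneg j)
    simpa [smul_eq_mul] using h
  calc ∑ j, f (lam j) = ∑ j, (∑ i, S i j) * f (lam j) := by
        refine Finset.sum_congr rfl fun j _ => ?_
        rw [hcol j, one_mul]
    _ = ∑ j, ∑ i, S i j * f (lam j) := by
        refine Finset.sum_congr rfl fun j _ => ?_
        rw [Finset.sum_mul]
    _ = ∑ i, ∑ j, S i j * f (lam j) := Finset.sum_comm
    _ ≤ ∑ i, f (((Vᴴ * M * V) i i).re) := Finset.sum_le_sum fun i _ => jensen i

/-- Subadditivity for corners of a PSD 2×2 block matrix. -/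
lemma corner {n m : Type*} [Fintype n] [Fintype m] [DecidableEq n] [DecidableEq m]
    {f : ℝ → ℝ} (hconc : ConcaveOn ℝ (Set.Ici 0) f)
    (P : Matrix n n ℂ) (X : Matrix n m ℂ) (Y : Matrix m n ℂ) (Q : Matrix m m ℂ)
    (hM : (Matrix.fromBlocks P X Y Q).PosSemidef) (hP : P.IsHermitian) (hQ : Q.IsHermitian) :
    ∑ i, f (hM.1.eigenvalues i) ≤ ∑ i, f (hP.eigenvalues i) + ∑ j, f (hQ.eigenvalues j) := by
  classical
  set EP : Matrix n n ℂ := (hP.eigenvectorUnitary : Matrix n n ℂ) with hEPd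
  set EQ : Matrix m m ℂ := (hQ.eigenvectorUnitary : Matrix m m ℂ) with hEQd
  have hEP1 : EP * EPᴴ = 1 := by
    rw [hEPd, ← Matrix.star_eq_conjTranspose]
    exact (Matrix.mem_unitaryGroup_iff).mp hP.eigenvectorUnitary.2
  have hEP2 : EPᴴ * EP = 1 := by
    rw [hEPd, ← Matrix.star_eq_conjTranspose]
    exact (Matrix.mem_unitaryGroup_iff').mp hP.eigenvectorUnitary.2
  have hEQ1 : EQ * EQᴴ = 1 := by
    rw [hEQd, ← Matrix.star_eq_conjTranspose]
    exact (Matrix.mem_unitaryGroup_iff).mp hQ.eigenvectorUnitary.2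
  have hEQ2 : EQᴴ * EQ = 1 := by
    rw [hEQd, ← Matrix.star_eq_conjTranspose]
    exact (Matrix.mem_unitaryGroup_iff').mp hQ.eigenvectorUnitary.2
  set V := Matrix.fromBlocks EP 0 0 EQ with hV
  have hVc : Vᴴ = Matrix.fromBlocks EPᴴ 0 0 EQᴴ := by
    rw [hV, Matrix.fromBlocks_conjTranspose]
    simp
  have hV1 : V * Vᴴ = 1 := by
    rw [hV, hVc, Matrix.fromBlocks_multiply]
    simpa [hEP1, hEQ1] using Matrix.fromBlocks_one
  have hV2 : Vᴴ * V = 1 := by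
    rw [hV, hVc, Matrix.fromBlocks_multiply]
    simpa [hEP2, hEQ2] using Matrix.fromBlocks_one
  have key := peierls hconc hM V hV1 hV2
  have hPdiag : EPᴴ * P * EP = Matrix.diagonal (fun i => ((hP.eigenvalues i : ℝ) : ℂ)) := by
    conv_lhs => rw [hP.spectral_theorem, Unitary.conjStarAlgAut_apply]
    rw [Matrix.star_eq_conjTranspose,
      show (RCLike.ofReal ∘ hP.eigenvalues : n → ℂ) = fun i => ((hP.eigenvalues i : ℝ) : ℂ) from rfl]
    calc EPᴴ * (EP * Matrix.diagonal (fun i => ((hP.eigenvalues i : ℝ) : ℂ)) * EPᴴ) * EP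
        = (EPᴴ * EP) * Matrix.diagonal (fun i => ((hP.eigenvalues i : ℝ) : ℂ)) * (EPᴴ * EP) := by
          simp only [Matrix.mul_assoc]
      _ = _ := by rw [hEP2, Matrix.one_mul, Matrix.mul_one]
  have hQdiag : EQᴴ * Q * EQ = Matrix.diagonal (fun j => ((hQ.eigenvalues j : ℝ) : ℂ)) := by
    conv_lhs => rw [hQ.spectral_theorem, Unitary.conjStarAlgAut_apply]
    rw [Matrix.star_eq_conjTranspose,
      show (RCLike.ofReal ∘ hQ.eigenvalues : m → ℂ) = fun j => ((hQ.eigenvalues j : ℝ) : ℂ) from rfl]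
    calc EQᴴ * (EQ * Matrix.diagonal (fun j => ((hQ.eigenvalues j : ℝ) : ℂ)) * EQᴴ) * EQ
        = (EQᴴ * EQ) * Matrix.diagonal (fun j => ((hQ.eigenvalues j : ℝ) : ℂ)) * (EQᴴ * EQ) := by
          simp only [Matrix.mul_assoc]
      _ = _ := by rw [hEQ2, Matrix.one_mul, Matrix.mul_one]
  have hblock : Vᴴ * (Matrix.fromBlocks P X Y Q) * V
      = Matrix.fromBlocks (EPᴴ * P * EP) (EPᴴ * X * EQ) (EQᴴ * Y * EP) (EQᴴ * Q * EQ) := by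
    rw [hV, hVc, Matrix.fromBlocks_multiply, Matrix.fromBlocks_multiply]
    congr 1 <;> try congr 1
    all_goals simp [Matrix.mul_assoc]
  rw [hblock] at key
  refine key.trans_eq ?_
  rw [Fintype.sum_sum_type]
  congr 1
  · refine Finset.sum_congr rfl fun i _ => ?_
    rw [Matrix.fromBlocks_apply₁₁, hPdiag, Matrix.diagonal_apply_eq]
    norm_num
  · refine Finset.sum_congr rfl fun j _ => ?_
    rw [Matrix.fromBlocks_apply₂₂, hQdiag, Matrix.diagonal_apply_eq]
    norm_num

/-- If `A₂₃ = 0` (or `A₁₂ = 0`), strong subadditivity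
`Tr f(A) + Tr f(A₂₂) ≤ Tr f(B) + Tr f(C)` holds for every concave continuous
`f : [0,∞) → ℝ`, where `Tr f(M) = ∑ f(λᵢ(M))`. -/
theorem ssa_of_A23_or_A12_zero {n1 n2 n3 : Type*} [Fintype n1] [Fintype n2] [Fintype n3]
    [DecidableEq n1] [DecidableEq n2] [DecidableEq n3]
    (f : ℝ → ℝ) (hconc : ConcaveOn ℝ (Set.Ici 0) f) (hcont : ContinuousOn f (Set.Ici 0))
    (A11 : Matrix n1 n1 ℂ) (A12 : Matrix n1 n2 ℂ) (A13 : Matrix n1 n3 ℂ)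
    (A22 : Matrix n2 n2 ℂ) (A23 : Matrix n2 n3 ℂ) (A33 : Matrix n3 n3 ℂ)
    (hA : (blk3 A11 A12 A13 A12ᴴ A22 A23 A13ᴴ A23ᴴ A33).PosSemidef)
    (hzero : A23 = 0 ∨ A12 = 0)
    (hA22 : A22.IsHermitian)
    (hB : (Matrix.fromBlocks A11 A12 A12ᴴ A22).IsHermitian)
    (hC : (Matrix.fromBlocks A22 A23 A23ᴴ A33).IsHermitian) :
    (∑ i, f (hA.1.eigenvalues i)) + (∑ i, f (hA22.eigenvalues i))
      ≤ (∑ i, f (hB.eigenvalues i)) + (∑ i, f (hC.eigenvalues i)) := by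
  classical
  obtain ⟨hA11, -, -, -⟩ := Matrix.isHermitian_fromBlocks_iff.mp hB
  obtain ⟨-, -, -, hA33⟩ := Matrix.isHermitian_fromBlocks_iff.mp hC
  rcases hzero with hz | hz
  · -- A23 = 0
    subst hz
    set e : (n1 ⊕ n2) ⊕ n3 ≃ n1 ⊕ (n2 ⊕ n3) := Equiv.sumAssoc n1 n2 n3 with he
    set M := blk3 A11 A12 A13 A12ᴴ A22 0 A13ᴴ (0 : Matrix n2 n3 ℂ)ᴴ A33 with hM
    set M' := M.submatrix e e with hM'
    have hM'psd : M'.PosSemidef := hA.submatrix e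
    have h11 : M'.toBlocks₁₁ = Matrix.fromBlocks A11 A12 A12ᴴ A22 := by
      ext i j
      cases i <;> cases j <;> rfl
    have h22 : M'.toBlocks₂₂ = A33 := by
      ext i j
      rfl
    have hfb : Matrix.fromBlocks (Matrix.fromBlocks A11 A12 A12ᴴ A22)
        M'.toBlocks₁₂ M'.toBlocks₂₁ A33 = M' := by
      rw [← h11, ← h22, Matrix.fromBlocks_toBlocks]
    have hM2 : (Matrix.fromBlocks (Matrix.fromBlocks A11 A12 A12ᴴ A22)
        M'.toBlocks₁₂ M'.toBlocks₂₁ A33).PosSemidef := by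
      rw [hfb]; exact hM'psd
    have key := corner hconc _ _ _ _ hM2 hB hA33
    have hcp : (Matrix.fromBlocks (Matrix.fromBlocks A11 A12 A12ᴴ A22)
        M'.toBlocks₁₂ M'.toBlocks₂₁ A33).charpoly = M.charpoly := by
      rw [hfb, hM']
      have : M.submatrix ⇑e ⇑e = Matrix.reindex e.symm e.symm M := by
        rw [Matrix.reindex_apply, Equiv.symm_symm]
      rw [this, Matrix.charpoly_reindex]
    have hsum1 : ∑ i, f (hA.1.eigenvalues i) = ∑ i, f (hM2.1.eigenvalues i) := by
      rw [evMul_sum f, evMul_sum f, evMul_eq_of_charpoly hM2.1 hA.1 hcp]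
    have hcpC : (Matrix.fromBlocks A22 0 (0 : Matrix n2 n3 ℂ)ᴴ A33).charpoly
        = A22.charpoly * A33.charpoly := by
      rw [Matrix.conjTranspose_zero]
      exact Matrix.charpoly_fromBlocks_zero₂₁ _ _ _
    have hsumC : ∑ i, f (hC.eigenvalues i)
        = ∑ i, f (hA22.eigenvalues i) + ∑ i, f (hA33.eigenvalues i) := by
      rw [evMul_sum f hC.eigenvalues, evMul_add_of_charpoly hC hA22 hA33 hcpC,
        Multiset.map_add, Multiset.sum_add, evMul_sum f, evMul_sum f]
    rw [hsum1, hsumC]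
    linarith
  · -- A12 = 0
    subst hz
    have hA' : (Matrix.fromBlocks A11
        (Matrix.of fun i => Sum.elim ((0 : Matrix n1 n2 ℂ) i) (A13 i))
        (Matrix.of (Sum.elim (0 : Matrix n1 n2 ℂ)ᴴ A13ᴴ))
        (Matrix.fromBlocks A22 A23 A23ᴴ A33)).PosSemidef := hA
    have key := corner hconc _ _ _ _ hA' hA11 hC
    have hsame : ∑ i, f (hA.1.eigenvalues i) = ∑ i, f (hA'.1.eigenvalues i) := rfl
    have hcpB : (Matrix.fromBlocks A11 0 (0 : Matrix n1 n2 ℂ)ᴴ A22).charpoly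
        = A11.charpoly * A22.charpoly := by
      rw [Matrix.conjTranspose_zero]
      exact Matrix.charpoly_fromBlocks_zero₂₁ _ _ _
    have hsumB : ∑ i, f (hB.eigenvalues i)
        = ∑ i, f (hA11.eigenvalues i) + ∑ i, f (hA22.eigenvalues i) := by
      rw [evMul_sum f hB.eigenvalues, evMul_add_of_charpoly hB hA11 hA22 hcpB,
        Multiset.map_add, Multiset.sum_add, evMul_sum f, evMul_sum f]
    rw [hsame, hsumB]
    linarith
end

section
/- For a Hermitian matrix A in 2×2 block form with diagonal blocks A₁₁, A₂₂ and any concave function f : ℝ → ℝ, Tr f(A) ≤ Tr f(A₁₁) + Tr f(A₂₂). -/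
open Matrix
open scoped ComplexOrder

/-- Key pinching lemma: if `W` is unitary and the diagonal of `Wᴴ A W` is the real
vector `μ`, then for concave `f`, `∑ f(eigenvalues A) ≤ ∑ f(μ)`. -/
lemma trace_f_pinch {N : Type*} [Fintype N] [DecidableEq N] {A : Matrix N N ℂ}
    (hA : A.IsHermitian) (W : Matrix N N ℂ) (hW : W ∈ Matrix.unitaryGroup N ℂ)
    (μ : N → ℝ) (hμ : ∀ k, (Wᴴ * A * W) k k = (μ k : ℂ))
    (f : ℝ → ℝ) (hconc : ConcaveOn ℝ Set.univ f) :
    ∑ i, f (hA.eigenvalues i) ≤ ∑ k, f (μ k) := by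
  classical
  set U : Matrix N N ℂ := (hA.eigenvectorUnitary : Matrix N N ℂ) with hU
  have hUmem : U ∈ Matrix.unitaryGroup N ℂ := hA.eigenvectorUnitary.2
  set B : Matrix N N ℂ := Wᴴ * U with hB
  have hW1 : W * Wᴴ = 1 := by
    simpa [Matrix.star_eq_conjTranspose] using (Matrix.mem_unitaryGroup_iff.mp hW)
  have hW2 : Wᴴ * W = 1 := by
    simpa [Matrix.star_eq_conjTranspose] using (Matrix.mem_unitaryGroup_iff'.mp hW)
  have hU1 : U * Uᴴ = 1 := by
    simpa [Matrix.star_eq_conjTranspose] using (Matrix.mem_unitaryGroup_iff.mp hUmem)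
  have hU2 : Uᴴ * U = 1 := by
    simpa [Matrix.star_eq_conjTranspose] using (Matrix.mem_unitaryGroup_iff'.mp hUmem)
  have hB1 : B * Bᴴ = 1 := by
    have : B * Bᴴ = Wᴴ * (U * Uᴴ) * W := by
      simp [hB, Matrix.conjTranspose_mul, Matrix.mul_assoc]
    rw [this, hU1, Matrix.mul_one, hW2]
  have hB2 : Bᴴ * B = 1 := by
    have : Bᴴ * B = Uᴴ * (W * Wᴴ) * U := by
      simp [hB, Matrix.conjTranspose_mul, Matrix.mul_assoc]
    rw [this, hW1, Matrix.mul_one, hU2]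
  set S : N → N → ℝ := fun k i => Complex.normSq (B k i) with hS
  have hSnn : ∀ k i, 0 ≤ S k i := fun k i => Complex.normSq_nonneg _
  have hrow : ∀ k, ∑ i, S k i = 1 := by
    intro k
    have h := congrFun (congrFun hB1 k) k
    rw [Matrix.mul_apply, Matrix.one_apply_eq] at h
    have : (↑(∑ i, S k i) : ℂ) = 1 := by
      push_cast
      rw [← h]
      refine Finset.sum_congr rfl fun i _ => ?_
      simp [hS, Matrix.conjTranspose_apply, Complex.star_def, Complex.mul_conj]
    exact_mod_cast this
  have hcol : ∀ i, ∑ k, S k i = 1 := by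
    intro i
    have h := congrFun (congrFun hB2 i) i
    rw [Matrix.mul_apply, Matrix.one_apply_eq] at h
    have : (↑(∑ k, S k i) : ℂ) = 1 := by
      push_cast
      rw [← h]
      refine Finset.sum_congr rfl fun k _ => ?_
      simp [hS, Matrix.conjTranspose_apply, Complex.star_def, mul_comm, Complex.mul_conj]
    exact_mod_cast this
  have hmain : ∀ k, μ k = ∑ i, S k i * hA.eigenvalues i := by
    intro k
    have hAeq : Wᴴ * A * W = B * Matrix.diagonal (Complex.ofReal ∘ hA.eigenvalues) * Bᴴ := by
      have hspec := hA.spectral_theorem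
      rw [Unitary.conjStarAlgAut_apply, Matrix.star_eq_conjTranspose] at hspec
      rw [hB]
      calc Wᴴ * A * W
          = Wᴴ * (U * Matrix.diagonal (Complex.ofReal ∘ hA.eigenvalues) * Uᴴ) * W := by
            conv_lhs => rw [hspec]
            rfl
        _ = Wᴴ * U * Matrix.diagonal (Complex.ofReal ∘ hA.eigenvalues) * (Uᴴ * W) := by
            simp [Matrix.mul_assoc]
        _ = Wᴴ * U * Matrix.diagonal (Complex.ofReal ∘ hA.eigenvalues) * (Wᴴ * U)ᴴ := by
            simp [Matrix.conjTranspose_mul]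
    have h := hμ k
    rw [hAeq, Matrix.mul_apply] at h
    have h2 : (↑(μ k) : ℂ) = ↑(∑ i, S k i * hA.eigenvalues i) := by
      rw [← h]
      push_cast
      refine Finset.sum_congr rfl fun i _ => ?_
      rw [Matrix.mul_diagonal, Matrix.conjTranspose_apply]
      simp only [Function.comp_apply, hS]
      rw [mul_comm (B k i) _, mul_assoc, Complex.star_def, Complex.mul_conj]
      ring
    exact_mod_cast h2
  calc ∑ i, f (hA.eigenvalues i)
      = ∑ i, (∑ k, S k i) * f (hA.eigenvalues i) := by
        refine Finset.sum_congr rfl fun i _ => ?_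
        rw [hcol i, one_mul]
    _ = ∑ k, ∑ i, S k i * f (hA.eigenvalues i) := by
        rw [Finset.sum_comm]
        simp [Finset.sum_mul]
    _ ≤ ∑ k, f (μ k) := by
        refine Finset.sum_le_sum fun k _ => ?_
        have := hconc.le_map_sum (t := Finset.univ) (w := S k)
          (p := fun i => hA.eigenvalues i)
          (fun i _ => hSnn k i) (hrow k) (fun i _ => Set.mem_univ _)
        simpa [smul_eq_mul, hmain k] using this

/-- Subadditivity: for a Hermitian 2×2 block matrix `A` and any concave `f : ℝ → ℝ`,
`Tr f(A) ≤ Tr f(A₁₁) + Tr f(A₂₂)`. -/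
theorem trace_f_subadditive {n1 n2 : Type*} [Fintype n1] [Fintype n2]
    [DecidableEq n1] [DecidableEq n2]
    (A11 : Matrix n1 n1 ℂ) (A12 : Matrix n1 n2 ℂ) (A22 : Matrix n2 n2 ℂ)
    (hA : (Matrix.fromBlocks A11 A12 A12ᴴ A22).IsHermitian)
    (hA11 : A11.IsHermitian) (hA22 : A22.IsHermitian)
    (f : ℝ → ℝ) (hconc : ConcaveOn ℝ Set.univ f) :
    (∑ i, f (hA.eigenvalues i))
      ≤ (∑ i, f (hA11.eigenvalues i)) + ∑ i, f (hA22.eigenvalues i) := by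
  classical
  set U1 : Matrix n1 n1 ℂ := (hA11.eigenvectorUnitary : Matrix n1 n1 ℂ)
  set U2 : Matrix n2 n2 ℂ := (hA22.eigenvectorUnitary : Matrix n2 n2 ℂ)
  have hU1mem := hA11.eigenvectorUnitary.2
  have hU2mem := hA22.eigenvectorUnitary.2
  set W : Matrix (n1 ⊕ n2) (n1 ⊕ n2) ℂ := Matrix.fromBlocks U1 0 0 U2 with hWdef
  have hWconj : Wᴴ = Matrix.fromBlocks U1ᴴ 0 0 U2ᴴ := by
    simp [hWdef, Matrix.fromBlocks_conjTranspose]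
  have hWmem : W ∈ Matrix.unitaryGroup (n1 ⊕ n2) ℂ := by
    rw [Matrix.mem_unitaryGroup_iff]
    have h1 : U1 * U1ᴴ = 1 := by
      simpa [Matrix.star_eq_conjTranspose] using (Matrix.mem_unitaryGroup_iff.mp hU1mem)
    have h2 : U2 * U2ᴴ = 1 := by
      simpa [Matrix.star_eq_conjTranspose] using (Matrix.mem_unitaryGroup_iff.mp hU2mem)
    rw [Matrix.star_eq_conjTranspose, hWconj, hWdef, Matrix.fromBlocks_multiply]
    simp [h1, h2, Matrix.fromBlocks_one]
  set μ : n1 ⊕ n2 → ℝ := Sum.elim hA11.eigenvalues hA22.eigenvalues with hμdef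
  have hdiag : ∀ k, (Wᴴ * (Matrix.fromBlocks A11 A12 A12ᴴ A22) * W) k k = (μ k : ℂ) := by
    have hd1 : star U1 * A11 * U1 = Matrix.diagonal (RCLike.ofReal ∘ hA11.eigenvalues) := by
      have := hA11.conjStarAlgAut_star_eigenvectorUnitary
      simp only [Unitary.conjStarAlgAut_star_apply, Unitary.coe_star] at this
      exact this
    have hd2 : star U2 * A22 * U2 = Matrix.diagonal (RCLike.ofReal ∘ hA22.eigenvalues) := by
      have := hA22.conjStarAlgAut_star_eigenvectorUnitary
      simp only [Unitary.conjStarAlgAut_star_apply, Unitary.coe_star] at this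
      exact this
    rw [Matrix.star_eq_conjTranspose] at hd1 hd2
    have hblock : Wᴴ * (Matrix.fromBlocks A11 A12 A12ᴴ A22) * W =
        Matrix.fromBlocks (U1ᴴ * A11 * U1) (U1ᴴ * A12 * U2)
          (U2ᴴ * A12ᴴ * U1) (U2ᴴ * A22 * U2) := by
      rw [hWconj, hWdef, Matrix.fromBlocks_multiply, Matrix.fromBlocks_multiply]
      congr 1 <;> simp [Matrix.mul_assoc]
    intro k
    rw [hblock]
    cases k with
    | inl j =>
        simp [hd1, hμdef, Matrix.diagonal_apply_eq]
    | inr j =>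
        simp [hd2, hμdef, Matrix.diagonal_apply_eq]
  have key := trace_f_pinch hA W hWmem μ hdiag f hconc
  calc ∑ i, f (hA.eigenvalues i) ≤ ∑ k, f (μ k) := key
    _ = (∑ i, f (hA11.eigenvalues i)) + ∑ i, f (hA22.eigenvalues i) := by
        rw [Fintype.sum_sum_type]
        simp [hμdef]
end

section
/- For every x ≥ 0 and 0 < t < 1, the representation xᵗ = (t sin(πt)/π) ∫₀^∞ λ^{t−1} log(1 + x/λ) dλ holds. -/
open Real MeasureTheory Set Filter Topology

namespace RpowLogAux

/-- Integrability of `u ^ (t-1) / (1+u)` on `(0, ∞)`. -/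
lemma integrableOn_pow_inv {t : ℝ} (ht0 : 0 < t) (ht1 : t < 1) :
    IntegrableOn (fun u : ℝ => u ^ (t - 1) * (1 + u)⁻¹) (Ioi 0) := by
  apply mellin_convergent_of_isBigO_scalar (a := 1) (b := 0) ?_ ?_ ht1 ?_ ht0
  · refine ContinuousOn.locallyIntegrableOn ?_ measurableSet_Ioi
    exact (continuousOn_const.add continuousOn_id).inv₀ (fun u hu => by
      have : (0:ℝ) < u := hu
      show (1:ℝ) + u ≠ 0; positivity)
  · apply Asymptotics.IsBigO.of_bound 1
    filter_upwards [eventually_ge_atTop (1:ℝ)] with u hu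
    have hu0 : (0:ℝ) < u := lt_of_lt_of_le one_pos hu
    rw [one_mul, Real.norm_eq_abs, Real.norm_eq_abs, Real.rpow_neg_one,
      abs_of_pos (by positivity), abs_of_pos (by positivity)]
    exact inv_anti₀ hu0 (by linarith)
  · apply Asymptotics.IsBigO.of_bound 1
    filter_upwards [self_mem_nhdsWithin] with u (hu : 0 < u)
    rw [one_mul, Real.norm_eq_abs, Real.norm_eq_abs, neg_zero, Real.rpow_zero,
      abs_one, abs_of_pos (by positivity), inv_le_one_iff₀]
    right; linarith

/-- Integrability of `u ^ (t-1) * log (1 + u⁻¹)` on `(0, ∞)`. -/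
lemma integrableOn_pow_log {t : ℝ} (ht0 : 0 < t) (ht1 : t < 1) :
    IntegrableOn (fun u : ℝ => u ^ (t - 1) * Real.log (1 + u⁻¹)) (Ioi 0) := by
  apply mellin_convergent_of_isBigO_scalar (a := 1) (b := t/2) ?_ ?_ ht1 ?_ (by linarith)
  · refine ContinuousOn.locallyIntegrableOn ?_ measurableSet_Ioi
    apply ContinuousOn.log
    · exact continuousOn_const.add (continuousOn_id.inv₀ (fun u hu => ne_of_gt hu))
    · intro u hu
      have : 0 < u := hu
      positivity
  · apply Asymptotics.IsBigO.of_bound 1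
    filter_upwards [eventually_ge_atTop (1:ℝ)] with u hu
    have hu0 : (0:ℝ) < u := lt_of_lt_of_le one_pos hu
    have h1 : (0:ℝ) < 1 + u⁻¹ := by positivity
    rw [one_mul, Real.norm_eq_abs, Real.norm_eq_abs, Real.rpow_neg_one,
      abs_of_nonneg (Real.log_nonneg (by nlinarith [inv_pos.mpr hu0])),
      abs_of_pos (by positivity)]
    have := Real.log_le_sub_one_of_pos h1
    linarith
  · set b := t/2 with hb
    have hb0 : 0 < b := by positivity
    apply Asymptotics.IsBigO.of_bound (2 ^ b / b)
    have hmem : Ioo (0:ℝ) 1 ∈ nhdsWithin (0:ℝ) (Ioi 0) :=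
      Ioo_mem_nhdsGT_of_mem ⟨le_refl _, one_pos⟩
    filter_upwards [hmem] with u hu
    have hu0 : 0 < u := hu.1
    have hui : (1:ℝ) ≤ u⁻¹ := (one_le_inv₀ hu0).mpr hu.2.le
    have h1 : (0:ℝ) < 1 + u⁻¹ := by positivity
    have key : Real.log (1 + u⁻¹) ≤ (2 * u⁻¹) ^ b / b := by
      have l1 : Real.log (1 + u⁻¹) ≤ Real.log (2 * u⁻¹) :=
        Real.log_le_log h1 (by linarith)
      have l2 : Real.log (2 * u⁻¹) = Real.log ((2 * u⁻¹) ^ b) / b := by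
        rw [Real.log_rpow (by positivity)]; field_simp
      have l3 : Real.log ((2 * u⁻¹) ^ b) ≤ (2 * u⁻¹) ^ b :=
        (Real.log_le_sub_one_of_pos (by positivity)).trans (by linarith)
      calc Real.log (1 + u⁻¹) ≤ Real.log ((2 * u⁻¹) ^ b) / b := by rw [← l2]; exact l1
        _ ≤ (2 * u⁻¹) ^ b / b := by gcongr
    have hrw : (2 * u⁻¹) ^ b = 2 ^ b * u ^ (-b) := by
      rw [Real.mul_rpow (by norm_num) (by positivity), Real.inv_rpow hu0.le,
        ← Real.rpow_neg hu0.le]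
    rw [Real.norm_eq_abs, Real.norm_eq_abs,
      abs_of_nonneg (Real.log_nonneg (by linarith)),
      abs_of_pos (Real.rpow_pos_of_pos hu0 _)]
    calc Real.log (1 + u⁻¹) ≤ (2 * u⁻¹) ^ b / b := key
      _ = 2 ^ b / b * u ^ (-b) := by rw [hrw]; ring

/-- The Beta-type integral `∫₀^∞ u^(t-1)/(1+u) du = π / sin (π t)`. -/
lemma integral_pow_inv {t : ℝ} (ht0 : 0 < t) (ht1 : t < 1) :
    ∫ u in Ioi (0:ℝ), u ^ (t - 1) * (1 + u)⁻¹ = π / Real.sin (π * t) := by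
  -- Step 1: the integral over (0,1) of x^(t-1) (1-x)^(-t)
  set J : ℝ := ∫ x in Ioo (0:ℝ) 1, x ^ (t - 1) * (1 - x) ^ (-t) with hJ
  -- Step 2: J = Γ(t) Γ(1-t)
  have hbeta : J = Real.Gamma t * Real.Gamma (1 - t) := by
    have h1 : (0:ℝ) < (t:ℂ).re := by simpa using ht0
    have h2 : (0:ℝ) < ((1:ℂ) - t).re := by simp; linarith
    have := Complex.Gamma_mul_Gamma_eq_betaIntegral h1 h2
    rw [show ((t:ℂ) + ((1:ℂ) - t)) = 1 by ring, Complex.Gamma_one, one_mul] at this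
    have hB : Complex.betaIntegral t (1 - t) = (J : ℂ) := by
      rw [Complex.betaIntegral, intervalIntegral.integral_of_le zero_le_one,
        MeasureTheory.integral_Ioc_eq_integral_Ioo,
        show ((J:ℂ)) = ∫ x in Ioo (0:ℝ) 1, ((x ^ (t - 1) * (1 - x) ^ (-t) : ℝ) : ℂ) by
          rw [hJ]; exact integral_ofReal.symm]
      refine setIntegral_congr_fun measurableSet_Ioo (fun x hx => ?_)
      have hx0 : (0:ℝ) < x := hx.1
      have hx1 : (0:ℝ) < 1 - x := by linarith [hx.2]
      rw [Complex.ofReal_mul, Complex.ofReal_cpow hx0.le, Complex.ofReal_cpow hx1.le]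
      push_cast
      rw [show (1:ℂ) - ↑t - 1 = -(t:ℂ) by ring]
    rw [hB] at this
    have hcast : ((Real.Gamma t * Real.Gamma (1 - t) : ℝ) : ℂ) = (J : ℂ) := by
      rw [← this, Complex.ofReal_mul, Complex.Gamma_ofReal,
        show (1:ℂ) - (t:ℂ) = ((1 - t : ℝ) : ℂ) by push_cast; ring, Complex.Gamma_ofReal]
    exact_mod_cast hcast.symm
  -- Step 3: substitution u ↦ u/(1+u) maps (0,∞) to (0,1)
  have hsub : ∫ u in Ioi (0:ℝ), u ^ (t - 1) * (1 + u)⁻¹ = J := by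
    have himg : (fun u : ℝ => u / (1 + u)) '' Ioi 0 = Ioo 0 1 := by
      ext v
      constructor
      · rintro ⟨u, (hu : 0 < u), rfl⟩
        have h1u : (0:ℝ) < 1 + u := by linarith
        exact mem_Ioo.mpr ⟨by positivity, (div_lt_one h1u).mpr (by linarith)⟩
      · intro hv
        have hv0 : (0:ℝ) < v := hv.1
        have h1v : (0:ℝ) < 1 - v := by linarith [hv.2]
        refine ⟨v / (1 - v), mem_Ioi.mpr (by positivity), ?_⟩
        field_simp
        ring
    have hderiv : ∀ u ∈ Ioi (0:ℝ), HasDerivWithinAt (fun u : ℝ => u / (1 + u))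
        (((1 + u) ^ 2)⁻¹) (Ioi 0) u := by
      intro u (hu : 0 < u)
      have h1u : (1:ℝ) + u ≠ 0 := by positivity
      have hd : HasDerivAt (fun y : ℝ => y / (1 + y))
          ((1 * (1 + u) - u * 1) / (1 + u) ^ 2) u :=
        (hasDerivAt_id' u).div ((hasDerivAt_id' u).const_add 1) h1u
      have heq : (1 * (1 + u) - u * 1) / (1 + u) ^ 2 = ((1 + u) ^ 2)⁻¹ := by
        field_simp
        ring
      rw [heq] at hd
      exact hd.hasDerivWithinAt
    have hinj : InjOn (fun u : ℝ => u / (1 + u)) (Ioi 0) := by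
      intro a (ha : 0 < a) b (hb : 0 < b) h
      have ha' : (0:ℝ) < 1 + a := by linarith
      have hb' : (0:ℝ) < 1 + b := by linarith
      field_simp at h
      linarith
    have := integral_image_eq_integral_abs_deriv_smul measurableSet_Ioi hderiv hinj
      (fun x : ℝ => x ^ (t - 1) * (1 - x) ^ (-t))
    rw [himg] at this
    rw [hJ, this]
    refine setIntegral_congr_fun measurableSet_Ioi (fun u hu => ?_)
    have hu0 : (0:ℝ) < u := hu
    have h1u : (0:ℝ) < 1 + u := by linarith
    have e1 : (1:ℝ) - u / (1 + u) = (1 + u)⁻¹ := by field_simp; ring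
    have e2 : (u / (1 + u)) ^ (t - 1) = u ^ (t - 1) * (1 + u) ^ (-(t - 1)) := by
      rw [Real.div_rpow hu0.le h1u.le, Real.rpow_neg h1u.le, div_eq_mul_inv]
    have e3 : ((1 + u)⁻¹ : ℝ) ^ (-t) = (1 + u) ^ t := by
      rw [Real.inv_rpow h1u.le, ← Real.rpow_neg h1u.le, neg_neg]
    have e4 : (((1 + u) ^ 2 : ℝ))⁻¹ = (1 + u) ^ (-(2:ℝ)) := by
      rw [← Real.rpow_natCast (1 + u) 2, ← Real.rpow_neg h1u.le]
      norm_num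
    rw [smul_eq_mul, abs_of_pos (by positivity), e1, e2, e3, e4]
    rw [show (1 + u) ^ (-(2:ℝ)) * (u ^ (t - 1) * (1 + u) ^ (-(t - 1)) * (1 + u) ^ t)
        = u ^ (t - 1) * ((1 + u) ^ (-(2:ℝ)) * (1 + u) ^ (-(t - 1)) * (1 + u) ^ t) by ring]
    rw [← Real.rpow_add h1u, ← Real.rpow_add h1u,
      show -(2:ℝ) + -(t - 1) + t = (-1:ℝ) by ring, Real.rpow_neg_one]
  rw [hsub, hbeta, Real.Gamma_mul_Gamma_one_sub]

/-- Integration by parts: `t * ∫₀^∞ u^(t-1) log(1+u⁻¹) du = ∫₀^∞ u^(t-1)/(1+u) du`. -/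
lemma parts {t : ℝ} (ht0 : 0 < t) (ht1 : t < 1) :
    t * ∫ u in Ioi (0:ℝ), u ^ (t - 1) * Real.log (1 + u⁻¹)
      = ∫ u in Ioi (0:ℝ), u ^ (t - 1) * (1 + u)⁻¹ := by
  set U : ℝ → ℝ := fun u => u ^ t with hU
  set V : ℝ → ℝ := fun u => Real.log (1 + u⁻¹) with hV
  set U' : ℝ → ℝ := fun u => t * u ^ (t - 1) with hU'
  set V' : ℝ → ℝ := fun u => -(u * (1 + u))⁻¹ with hV'
  have hUderiv : ∀ u ∈ Ioi (0:ℝ), HasDerivAt U (U' u) u := fun u hu =>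
    Real.hasDerivAt_rpow_const (Or.inl (ne_of_gt hu))
  have hVderiv : ∀ u ∈ Ioi (0:ℝ), HasDerivAt V (V' u) u := by
    intro u (hu : 0 < u)
    have h1 : (0:ℝ) < 1 + u⁻¹ := by positivity
    have hinner : HasDerivAt (fun u : ℝ => 1 + u⁻¹) (-(u ^ 2)⁻¹) u :=
      (hasDerivAt_inv (ne_of_gt hu)).const_add 1
    have := hinner.log (ne_of_gt h1)
    have heq : -(u ^ 2)⁻¹ / (1 + u⁻¹) = V' u := by
      rw [hV']; field_simp; ring
    rw [heq] at this
    exact this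
  have key := MeasureTheory.integral_Ioi_deriv_mul_eq_sub (a := 0) (a' := (0:ℝ)) (b' := (0:ℝ))
    hUderiv hVderiv ?_ ?_ ?_
  · have hA := integrableOn_pow_log ht0 ht1
    have hB := integrableOn_pow_inv ht0 ht1
    have heq : ∀ u ∈ Ioi (0:ℝ), U' u * V u + U u * V' u
        = t * (u ^ (t - 1) * Real.log (1 + u⁻¹)) - u ^ (t - 1) * (1 + u)⁻¹ := by
      intro u (hu : 0 < u)
      have h1u : (0:ℝ) < 1 + u := by linarith
      have e : U u * V' u = -(u ^ (t - 1) * (1 + u)⁻¹) := by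
        simp only [hU, hV']
        rw [show u ^ t = u ^ (t - 1) * u by
          rw [← Real.rpow_add_one (ne_of_gt hu)]; ring_nf]
        field_simp
      rw [e]
      simp only [hU', hV]
      ring
    have h0 : ∫ u in Ioi (0:ℝ), (U' u * V u + U u * V' u)
        = t * (∫ u in Ioi (0:ℝ), u ^ (t - 1) * Real.log (1 + u⁻¹))
          - ∫ u in Ioi (0:ℝ), u ^ (t - 1) * (1 + u)⁻¹ := by
      rw [setIntegral_congr_fun measurableSet_Ioi heq,
        MeasureTheory.integral_sub (hA.const_mul t) hB,
        MeasureTheory.integral_const_mul]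
    rw [key] at h0
    norm_num at h0
    linarith [h0]
  · -- integrability of U' * V + U * V'
    have hA := (integrableOn_pow_log ht0 ht1).const_mul t
    have hB := integrableOn_pow_inv ht0 ht1
    refine MeasureTheory.IntegrableOn.congr_fun (hA.sub hB) ?_ measurableSet_Ioi
    intro u (hu : 0 < u)
    have h1u : (0:ℝ) < 1 + u := by linarith
    have e : U u * V' u = -(u ^ (t - 1) * (1 + u)⁻¹) := by
      simp only [hU, hV']
      rw [show u ^ t = u ^ (t - 1) * u by
        rw [← Real.rpow_add_one (ne_of_gt hu)]; ring_nf]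
      field_simp
    simp only [Pi.add_apply, Pi.mul_apply, Pi.sub_apply]
    rw [e]
    simp only [hU', hV]
    ring
  · -- limit at 0⁺
    have h1 : Tendsto (fun u : ℝ => u ^ t * Real.log (1 + u)) (nhdsWithin 0 (Ioi 0)) (𝓝 0) := by
      have hc : ContinuousAt (fun u : ℝ => u ^ t * Real.log (1 + u)) 0 := by
        apply ContinuousAt.mul
        · exact Real.continuousAt_rpow_const 0 t (Or.inr ht0.le)
        · exact (Real.continuousAt_log (by norm_num)).comp
            (continuous_const.add continuous_id).continuousAt
      have := hc.continuousWithinAt (s := Ioi 0)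
      simpa [Real.zero_rpow (ne_of_gt ht0)] using this.tendsto
    have h2 : Tendsto (fun u : ℝ => Real.log u * u ^ t) (nhdsWithin 0 (Ioi 0)) (𝓝 0) :=
      tendsto_log_mul_rpow_nhdsGT_zero ht0
    have h3 := h1.sub h2
    rw [sub_zero] at h3
    apply h3.congr'
    filter_upwards [self_mem_nhdsWithin] with u (hu : 0 < u)
    have h1u : (0:ℝ) < 1 + u := by linarith
    simp only [Pi.mul_apply, hU, hV]
    rw [show (1:ℝ) + u⁻¹ = (1 + u) / u by field_simp; ring,
      Real.log_div (ne_of_gt h1u) (ne_of_gt hu)]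
    ring
  · -- limit at ∞
    apply tendsto_of_tendsto_of_tendsto_of_le_of_le' tendsto_const_nhds
      (tendsto_rpow_neg_atTop (show (0:ℝ) < 1 - t by linarith))
    · filter_upwards [eventually_gt_atTop (0:ℝ)] with u hu
      have h1 : (1:ℝ) ≤ 1 + u⁻¹ := by
        have : (0:ℝ) < u⁻¹ := by positivity
        linarith
      have := Real.log_nonneg h1
      simp only [Pi.mul_apply, hU, hV]
      positivity
    · filter_upwards [eventually_gt_atTop (0:ℝ)] with u hu
      have h1 : (0:ℝ) < 1 + u⁻¹ := by positivity
      have hlog : Real.log (1 + u⁻¹) ≤ u⁻¹ := by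
        have := Real.log_le_sub_one_of_pos h1
        linarith
      simp only [Pi.mul_apply, hU, hV]
      calc u ^ t * Real.log (1 + u⁻¹) ≤ u ^ t * u⁻¹ := by
            apply mul_le_mul_of_nonneg_left hlog (Real.rpow_nonneg hu.le t)
        _ = u ^ (-(1 - t)) := by
            rw [← Real.rpow_neg_one u, ← Real.rpow_add hu]
            ring_nf

end RpowLogAux

/-- For `x ≥ 0` and `0 < t < 1`,
`xᵗ = (t sin(πt)/π) ∫₀^∞ λ^{t−1} log(1 + x/λ) dλ`. -/
theorem rpow_eq_log_integral (x t : ℝ) (hx : 0 ≤ x) (ht0 : 0 < t) (ht1 : t < 1) :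
    x ^ t = (t * Real.sin (π * t) / π) *
      ∫ l in Set.Ioi (0 : ℝ), l ^ (t - 1) * Real.log (1 + x / l) := by
  rcases eq_or_lt_of_le hx with rfl | hx0
  · simp [Real.zero_rpow (ne_of_gt ht0)]
  -- scaling: substitute l = x * u
  have hscale : ∫ l in Set.Ioi (0:ℝ), l ^ (t - 1) * Real.log (1 + x / l)
      = x ^ t * ∫ u in Set.Ioi (0:ℝ), u ^ (t - 1) * Real.log (1 + u⁻¹) := by
    have := MeasureTheory.integral_comp_mul_left_Ioi
      (fun l : ℝ => l ^ (t - 1) * Real.log (1 + x / l)) 0 hx0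
    rw [mul_zero] at this
    have hcongr : ∫ u in Set.Ioi (0:ℝ),
        (fun l : ℝ => l ^ (t - 1) * Real.log (1 + x / l)) (x * u)
        = x ^ (t - 1) * ∫ u in Set.Ioi (0:ℝ), u ^ (t - 1) * Real.log (1 + u⁻¹) := by
      rw [← MeasureTheory.integral_const_mul]
      refine setIntegral_congr_fun measurableSet_Ioi (fun u hu => ?_)
      have hu0 : (0:ℝ) < u := hu
      show (x * u) ^ (t - 1) * Real.log (1 + x / (x * u))
          = x ^ (t - 1) * (u ^ (t - 1) * Real.log (1 + u⁻¹))
      rw [Real.mul_rpow hx0.le hu0.le, show x / (x * u) = u⁻¹ by field_simp]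
      ring
    rw [hcongr] at this
    rw [smul_eq_mul] at this
    have hxne : x ≠ 0 := ne_of_gt hx0
    have : x * (x ^ (t - 1) * ∫ u in Set.Ioi (0:ℝ), u ^ (t - 1) * Real.log (1 + u⁻¹))
        = ∫ l in Set.Ioi (0:ℝ), l ^ (t - 1) * Real.log (1 + x / l) := by
      rw [this]; field_simp
    rw [← this, ← mul_assoc, mul_comm x (x ^ (t - 1)), ← Real.rpow_add_one hxne]
    norm_num
  have hparts := RpowLogAux.parts ht0 ht1
  have hbeta := RpowLogAux.integral_pow_inv ht0 ht1
  have hsin : Real.sin (π * t) ≠ 0 := by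
    apply ne_of_gt
    apply Real.sin_pos_of_pos_of_lt_pi (by positivity)
    calc π * t < π * 1 := by
          apply mul_lt_mul_of_pos_left ht1 Real.pi_pos
      _ = π := mul_one π
  have htne : t ≠ 0 := ne_of_gt ht0
  have hpine : π ≠ 0 := Real.pi_ne_zero
  set A := ∫ u in Set.Ioi (0:ℝ), u ^ (t - 1) * Real.log (1 + u⁻¹) with hAdef
  have hK : t * A = π / Real.sin (π * t) := by rw [hparts, hbeta]
  rw [hscale,
    show (t * Real.sin (π * t) / π) * (x ^ t * A)
      = x ^ t * ((Real.sin (π * t) / π) * (t * A)) by ring, hK]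
  field_simp
end

section
/- The function κ(x) = −x log x + (x+1) log(x+1) admits the integral representation κ(x) = ∫₀¹ (1 − x/(1+t) − t/(x+t)) dt + ∫₁^∞ ((x+1)/t − x/(1+t) − 1/(x+t)) dt for all x > 0. -/
open Real MeasureTheory Set Filter

/-- Integral representation of `κ(x) = −x log x + (x+1) log(x+1)`:
`κ(x) = ∫₀¹ (1 − x/(1+t) − t/(x+t)) dt + ∫₁^∞ ((x+1)/t − x/(1+t) − 1/(x+t)) dt`. -/
theorem kappa_integral_representation (x : ℝ) (hx : 0 < x) :
    -x * Real.log x + (x + 1) * Real.log (x + 1)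
      = (∫ t in Set.Ioo (0 : ℝ) 1, (1 - x / (1 + t) - t / (x + t)))
        + ∫ t in Set.Ioi (1 : ℝ), ((x + 1) / t - x / (1 + t) - 1 / (x + t)) := by
  -- First integral
  have hI1 : (∫ t in Set.Ioo (0 : ℝ) 1, (1 - x / (1 + t) - t / (x + t)))
      = x * Real.log (x + 1) - x * Real.log 2 - x * Real.log x := by
    rw [← MeasureTheory.integral_Ioc_eq_integral_Ioo,
      ← intervalIntegral.integral_of_le (by norm_num : (0:ℝ) ≤ 1)]
    have key : ∀ t ∈ Set.uIcc (0:ℝ) 1,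
        HasDerivAt (fun t => x * (Real.log (x + t) - Real.log (1 + t)))
          (1 - x / (1 + t) - t / (x + t)) t := by
      intro t ht
      rw [Set.uIcc_of_le (by norm_num : (0:ℝ) ≤ 1)] at ht
      have ht0 : 0 ≤ t := ht.1
      have hxt : 0 < x + t := by linarith
      have h1t : 0 < 1 + t := by linarith
      have d1 : HasDerivAt (fun t => Real.log (x + t)) (1 / (x + t)) t := by
        simpa using ((hasDerivAt_id t).const_add x).log hxt.ne'
      have d2 : HasDerivAt (fun t => Real.log (1 + t)) (1 / (1 + t)) t := by
        simpa using ((hasDerivAt_id t).const_add 1).log h1t.ne'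
      have := ((d1.sub d2).const_mul x)
      refine this.congr_deriv ?_
      field_simp
      ring
    have hcont : ContinuousOn (fun t => 1 - x / (1 + t) - t / (x + t)) (Set.uIcc (0:ℝ) 1) := by
      rw [Set.uIcc_of_le (by norm_num : (0:ℝ) ≤ 1)]
      apply ContinuousOn.sub
      · apply ContinuousOn.sub continuousOn_const
        exact ContinuousOn.div continuousOn_const (by fun_prop)
          (fun t ht => by nlinarith [ht.1])
      · exact ContinuousOn.div (by fun_prop) (by fun_prop)
          (fun t ht => by nlinarith [ht.1])
    rw [intervalIntegral.integral_eq_sub_of_hasDerivAt key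
      (hcont.intervalIntegrable)]
    simp [Real.log_one]
    ring
  -- Second integral
  have hI2 : (∫ t in Set.Ioi (1 : ℝ), ((x + 1) / t - x / (1 + t) - 1 / (x + t)))
      = x * Real.log 2 + Real.log (x + 1) := by
    set F : ℝ → ℝ := fun t => (x + 1) * Real.log t - x * Real.log (1 + t) - Real.log (x + t)
      with hF
    have hderiv : ∀ t ∈ Set.Ioi (1:ℝ),
        HasDerivAt F ((x + 1) / t - x / (1 + t) - 1 / (x + t)) t := by
      intro t ht
      have ht1 : (1:ℝ) < t := ht
      have ht0 : 0 < t := by linarith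
      have h1t : 0 < 1 + t := by linarith
      have hxt : 0 < x + t := by linarith
      have d0 : HasDerivAt (fun t => Real.log t) (1 / t) t := by
        simpa using Real.hasDerivAt_log ht0.ne'
      have d1 : HasDerivAt (fun t => Real.log (1 + t)) (1 / (1 + t)) t := by
        simpa using ((hasDerivAt_id t).const_add 1).log h1t.ne'
      have d2 : HasDerivAt (fun t => Real.log (x + t)) (1 / (x + t)) t := by
        simpa using ((hasDerivAt_id t).const_add x).log hxt.ne'
      have := ((d0.const_mul (x+1)).sub (d1.const_mul x)).sub d2
      refine this.congr_deriv ?_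
      field_simp
    have hcont : ContinuousOn F (Set.Ici (1:ℝ)) := by
      apply ContinuousOn.sub
      apply ContinuousOn.sub
      · exact continuousOn_const.mul (Real.continuousOn_log.comp (by fun_prop)
          (fun t ht => by simp; intro h; rw [h] at ht; simp at ht; linarith [ht]))
      · exact continuousOn_const.mul (Real.continuousOn_log.comp (by fun_prop)
          (fun t ht => by have : (1:ℝ) ≤ t := ht; simp; intro h; linarith))
      · exact (Real.continuousOn_log.comp (by fun_prop)
          (fun t ht => by have : (1:ℝ) ≤ t := ht; simp; intro h; linarith))
    have hnonneg : ∀ t ∈ Set.Ioi (1:ℝ), 0 ≤ (x + 1) / t - x / (1 + t) - 1 / (x + t) := by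
      intro t ht
      have ht1 : (1:ℝ) < t := ht
      have ht0 : 0 < t := by linarith
      have h1t : 0 < 1 + t := by linarith
      have hxt : 0 < x + t := by linarith
      have h1 : x / (1 + t) ≤ x / t := by
        exact div_le_div_of_nonneg_left hx.le ht0 (by linarith)
      have h2 : 1 / (x + t) ≤ 1 / t := by
        exact div_le_div_of_nonneg_left one_pos.le ht0 (by linarith)
      have : (x + 1) / t = x / t + 1 / t := by ring
      linarith
    have hlim : Tendsto F atTop (nhds 0) := by
      have hFeq : ∀ᶠ t in atTop, F t = x * Real.log (t / (1 + t)) + Real.log (t / (x + t)) := by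
        filter_upwards [eventually_gt_atTop (0:ℝ)] with t ht
        rw [hF]
        rw [Real.log_div ht.ne' (by linarith), Real.log_div ht.ne' (by linarith)]
        ring
      rw [Filter.tendsto_congr' hFeq]
      have lim1 : Tendsto (fun t : ℝ => t / (1 + t)) atTop (nhds 1) := by
        have : (fun t : ℝ => t / (1 + t)) =ᶠ[atTop] fun t => 1 / (1 / t + 1) := by
          filter_upwards [eventually_gt_atTop (0:ℝ)] with t ht
          field_simp
        rw [Filter.tendsto_congr' this]
        have : Tendsto (fun t : ℝ => 1 / t + 1) atTop (nhds 1) := by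
          simpa using (tendsto_inv_atTop_zero.add tendsto_const_nhds :
            Tendsto (fun t : ℝ => t⁻¹ + 1) atTop (nhds (0 + 1)))
        simpa using this.inv₀ (by norm_num)
      have lim2 : Tendsto (fun t : ℝ => t / (x + t)) atTop (nhds 1) := by
        have : (fun t : ℝ => t / (x + t)) =ᶠ[atTop] fun t => 1 / (x / t + 1) := by
          filter_upwards [eventually_gt_atTop (0:ℝ)] with t ht
          field_simp
        rw [Filter.tendsto_congr' this]
        have : Tendsto (fun t : ℝ => x / t + 1) atTop (nhds 1) := by
          have hx0 : Tendsto (fun t : ℝ => x / t) atTop (nhds 0) := by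
            simpa [div_eq_mul_inv] using tendsto_inv_atTop_zero.const_mul x
          simpa using hx0.add tendsto_const_nhds
        simpa using this.inv₀ (by norm_num)
      have := ((Real.continuousAt_log one_ne_zero).tendsto.comp lim1).const_mul x
      have h2 := (Real.continuousAt_log one_ne_zero).tendsto.comp lim2
      simpa [Real.log_one] using this.add h2
    have := MeasureTheory.integral_Ioi_of_hasDerivAt_of_nonneg (hcont 1 Set.self_mem_Ici) hderiv hnonneg hlim
    rw [this, hF]
    simp [Real.log_one]
    ring
  rw [hI1, hI2]
  ring
end
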